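/- Let f : ℝ^d → ℝ be differentiable and L-smooth with L > 0, let the blocks be partitioned into disjoint clusters C_0,…,C_C, and let η ∈ (0, 1/((L+1)·S·Q)]. Fix a point θ ∈ ℝ^d and, for each cluster c, a block sequence k_c^0,…,k_c^{S−1} with all blocks in C_c. For each c, let θ_c be the final iterate of Markov chain coordinate descent started at θ with step size η, block sequence (k_c^s), and Q inner updates per block (so θ_c differs from θ only on the coordinates belonging to blocks in C_c), and let θ⁺ ∈ ℝ^d be the point that agrees with θ_c on the coordinates of the blocks of cluster c, for every c. Then f(θ⁺) − f(θ) ≤ η·S·Q·C₁·(1 + η·(L+1)·S·Q·C₁)·‖∇f(θ)‖² + η·(η·(L+1)·S·Q − 1)·∑_{c=0}^{C} ∑_{s=0}^{S−1} ∑_{q=0}^{Q−1} ‖∇_{k_c^s} f(θ)‖², where C₁ := η·e·L·S·Q. -/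

import Mathlib

open RealInnerProductSpace


/-- For a block `k` (blocks given by the assignment `blk : Fin d → K` of coordinates
to blocks), the vector `∇̄_k f(v)` agreeing with the gradient of `f` at `v` on the
coordinates of block `k` and zero elsewhere.  Note `‖maskedGrad blk f v k‖ = ‖∇_k f(v)‖`. -/
noncomputable def maskedGrad {d : ℕ} {K : Type*} [DecidableEq K]
    (blk : Fin d → K) (f : EuclideanSpace ℝ (Fin d) → ℝ)
    (v : EuclideanSpace ℝ (Fin d)) (k : K) : EuclideanSpace ℝ (Fin d) :=
  WithLp.toLp 2 (fun i => if blk i = k then gradient f v i else 0)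

open Finset in
lemma euclid_sum_apply {d : ℕ} {ι : Type*} (s : Finset ι)
    (x : ι → EuclideanSpace ℝ (Fin d)) (i : Fin d) :
    (∑ c ∈ s, x c) i = ∑ c ∈ s, x c i := by
  classical
  induction s using Finset.cons_induction with
  | empty => rfl
  | cons a s ha ih => rw [Finset.sum_cons, Finset.sum_cons, PiLp.add_apply, ih]

lemma euclid_norm_le_of_abs_le {d : ℕ} {x y : EuclideanSpace ℝ (Fin d)}
    (h : ∀ i, |x i| ≤ |y i|) : ‖x‖ ≤ ‖y‖ := by
  rw [EuclideanSpace.norm_eq, EuclideanSpace.norm_eq]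
  apply Real.sqrt_le_sqrt
  apply Finset.sum_le_sum
  intro i _
  rw [Real.norm_eq_abs, Real.norm_eq_abs]
  exact pow_le_pow_left₀ (abs_nonneg _) (h i) 2

lemma maskedGrad_inner {d : ℕ} {K : Type*} [DecidableEq K]
    (blk : Fin d → K) (f : EuclideanSpace ℝ (Fin d) → ℝ)
    (v : EuclideanSpace ℝ (Fin d)) (k : K) :
    ⟪gradient f v, maskedGrad blk f v k⟫ = ‖maskedGrad blk f v k‖ ^ 2 := by
  rw [← real_inner_self_eq_norm_sq, PiLp.inner_apply, PiLp.inner_apply]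
  apply Finset.sum_congr rfl
  intro i _
  simp only [maskedGrad, PiLp.toLp_apply, RCLike.inner_apply, conj_trivial]
  split_ifs <;> ring

lemma maskedGrad_sub_norm_le {d : ℕ} {K : Type*} [DecidableEq K]
    (blk : Fin d → K) (f : EuclideanSpace ℝ (Fin d) → ℝ)
    (x y : EuclideanSpace ℝ (Fin d)) (k : K) :
    ‖maskedGrad blk f x k - maskedGrad blk f y k‖ ≤ ‖gradient f x - gradient f y‖ := by
  apply euclid_norm_le_of_abs_le
  intro i
  rw [PiLp.sub_apply, PiLp.sub_apply]
  simp only [maskedGrad, PiLp.toLp_apply]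
  split_ifs
  · exact le_refl _
  · simpa using abs_nonneg _

lemma inner_zero_of_disjoint_support {d : ℕ} {x y : EuclideanSpace ℝ (Fin d)}
    (h : ∀ i, x i = 0 ∨ y i = 0) : ⟪x, y⟫ = 0 := by
  rw [PiLp.inner_apply]
  apply Finset.sum_eq_zero
  intro i _
  rcases h i with h | h <;> simp [h]

open Finset in
lemma norm_sq_sum_of_disjoint_support {d C : ℕ}
    (x : Fin (C + 1) → EuclideanSpace ℝ (Fin d)) (p : Fin d → Fin (C + 1))
    (hx : ∀ c i, p i ≠ c → x c i = 0) :
    ‖∑ c : Fin (C + 1), x c‖ ^ 2 = ∑ c : Fin (C + 1), ‖x c‖ ^ 2 := by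
  rw [← real_inner_self_eq_norm_sq, sum_inner]
  apply Finset.sum_congr rfl
  intro c _
  rw [inner_sum, ← real_inner_self_eq_norm_sq]
  apply Finset.sum_eq_single c
  · intro c' _ hne
    apply inner_zero_of_disjoint_support
    intro i
    by_cases h : p i = c
    · exact Or.inr (hx c' i (h ▸ hne.symm))
    · exact Or.inl (hx c i h)
  · intro h; exact absurd (mem_univ c) h

/-- quadratic upper bound from Lipschitz gradient -/
lemma descent_lemma {d : ℕ} {f : EuclideanSpace ℝ (Fin d) → ℝ} {L : ℝ} (hL : 0 < L)
    (hdiff : Differentiable ℝ f)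
    (hsmooth : ∀ x y : EuclideanSpace ℝ (Fin d),
      ‖gradient f x - gradient f y‖ ≤ L * ‖x - y‖)
    (x y : EuclideanSpace ℝ (Fin d)) :
    f y ≤ f x + ⟪gradient f x, y - x⟫ + L / 2 * ‖y - x‖ ^ 2 := by
  set dv := y - x with hdv
  have hline : ∀ t : ℝ, HasDerivAt (fun t : ℝ => x + t • dv) dv t := fun t => by
    simpa using ((hasDerivAt_id t).smul_const dv).const_add x
  have hphi : ∀ t : ℝ, HasDerivAt (fun t : ℝ => f (x + t • dv))
      ⟪gradient f (x + t • dv), dv⟫ t := by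
    intro t
    have h1 := ((hdiff (x + t • dv)).hasGradientAt.hasFDerivAt).comp_hasDerivAt t (hline t)
    exact h1
  set ψ : ℝ → ℝ := fun t => f (x + t • dv) - t * ⟪gradient f x, dv⟫ - L / 2 * t ^ 2 * ‖dv‖ ^ 2
    with hψ
  have hψd : ∀ t : ℝ, HasDerivAt ψ
      (⟪gradient f (x + t • dv), dv⟫ - ⟪gradient f x, dv⟫ - L * t * ‖dv‖ ^ 2) t := by
    intro t
    have h2 : HasDerivAt (fun t : ℝ => t * ⟪gradient f x, dv⟫) ⟪gradient f x, dv⟫ t := by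
      simpa using (hasDerivAt_id t).mul_const ⟪gradient f x, dv⟫
    have h3 : HasDerivAt (fun t : ℝ => L / 2 * t ^ 2 * ‖dv‖ ^ 2) (L * t * ‖dv‖ ^ 2) t := by
      have := ((hasDerivAt_pow 2 t).const_mul (L / 2)).mul_const (‖dv‖ ^ 2)
      refine this.congr_deriv ?_
      rw [show (2:ℕ) - 1 = 1 from rfl, pow_one]; push_cast; ring
    exact ((hphi t).sub h2).sub h3
  have hanti : AntitoneOn ψ (Set.Icc 0 1) := by
    apply antitoneOn_of_deriv_nonpos (convex_Icc 0 1)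
    · exact fun t _ => ((hψd t).continuousAt).continuousWithinAt
    · exact fun t _ => ((hψd t).differentiableAt).differentiableWithinAt
    · intro t ht
      rw [interior_Icc] at ht
      rw [(hψd t).deriv]
      have hsub : (x + t • dv) - x = t • dv := by abel
      have h4 : ⟪gradient f (x + t • dv) - gradient f x, dv⟫ ≤ L * t * ‖dv‖ ^ 2 := by
        calc ⟪gradient f (x + t • dv) - gradient f x, dv⟫
            ≤ ‖gradient f (x + t • dv) - gradient f x‖ * ‖dv‖ := real_inner_le_norm _ _
          _ ≤ (L * ‖(x + t • dv) - x‖) * ‖dv‖ := by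
              apply mul_le_mul_of_nonneg_right (hsmooth _ _) (norm_nonneg _)
          _ = L * t * ‖dv‖ ^ 2 := by
              rw [hsub, norm_smul, Real.norm_eq_abs, abs_of_pos ht.1]; ring
      rw [inner_sub_left] at h4
      linarith
  have h01 := hanti (Set.mem_Icc.2 ⟨le_refl 0, zero_le_one⟩)
      (Set.mem_Icc.2 ⟨zero_le_one, le_refl 1⟩) zero_le_one
  simp only [hψ, zero_smul, add_zero, one_smul, zero_mul, sub_zero, one_pow, mul_one,
    zero_pow, mul_zero] at h01
  have hxy : x + dv = y := by rw [hdv]; abel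
  rw [hxy] at h01
  linarith

/-- flattened coordinate-descent trajectory -/
noncomputable def mtcdTraj {d : ℕ} {K : Type*} [DecidableEq K]
    (blk : Fin d → K) (f : EuclideanSpace ℝ (Fin d) → ℝ) (η : ℝ) (Q : ℕ)
    (kseq : ℕ → K) (θ : EuclideanSpace ℝ (Fin d)) : ℕ → EuclideanSpace ℝ (Fin d)
  | 0 => θ
  | (t + 1) => mtcdTraj blk f η Q kseq θ t -
      η • maskedGrad blk f (mtcdTraj blk f η Q kseq θ t) (kseq (t / Q))

open Finset in
lemma sum_div_blocks {S Q : ℕ} (hQ : 1 ≤ Q) (F : ℕ → ℝ) :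
    ∑ t ∈ range (S * Q), F (t / Q) = ∑ s ∈ range S, ∑ q ∈ range Q, F s := by
  induction S with
  | zero => simp
  | succ S ih =>
    rw [sum_range_succ, ← ih, Nat.succ_mul, Finset.sum_range_add]
    congr 1
    apply Finset.sum_congr rfl
    intro q hq
    congr 1
    rw [add_comm, Nat.add_mul_div_right _ _ (by omega : 0 < Q),
      Nat.div_eq_of_lt (mem_range.mp hq), zero_add]

lemma geom_bound {a b : ℝ} (ha : 0 ≤ a) (hb : 0 ≤ b) (x : ℕ → ℝ)
    (h0 : x 0 = 0) (hrec : ∀ t, x (t + 1) ≤ (1 + a) * x t + b) (hx : ∀ t, 0 ≤ x t) :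
    ∀ t, x t ≤ b * t * (1 + a) ^ t := by
  intro t
  induction t with
  | zero => simp [h0]
  | succ t ih =>
    have h1 : (1 : ℝ) ≤ (1 + a) ^ (t + 1) := one_le_pow₀ (by linarith)
    calc x (t + 1) ≤ (1 + a) * x t + b := hrec t
      _ ≤ (1 + a) * (b * t * (1 + a) ^ t) + b := by nlinarith [hx t]
      _ = b * t * (1 + a) ^ (t + 1) + b := by ring
      _ ≤ b * (t + 1) * (1 + a) ^ (t + 1) := by nlinarith
      _ = b * ↑(t + 1) * (1 + a) ^ (t + 1) := by push_cast; ring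

set_option maxHeartbeats 1000000

/-- **Descent bound for parallel disjoint (token-per-cluster) Markov chain coordinate
descent.** The blocks `K` are partitioned into clusters `C_0,…,C_C` via `cl : K → Fin (C+1)`;
for each cluster `c` a coordinate-descent run starts from `θ`, uses a block sequence lying in
cluster `c`, and produces a final iterate `v c S 0`; the combined point `θ⁺` takes, on the
coordinates of the blocks of cluster `c`, the values of cluster `c`'s final iterate.  Then
`f(θ⁺) − f(θ) ≤ η S Q C₁ (1 + η(L+1)SQC₁)‖∇f(θ)‖²
  + η(η(L+1)SQ − 1) ∑_c ∑_{s<S} ∑_{q<Q} ‖∇_{k_c^s} f(θ)‖²` with `C₁ = η e L S Q`. -/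
theorem mtcd_token_per_cluster_descent_bound
    {d : ℕ} (hd : 1 ≤ d) {K : Type*} [Fintype K] [DecidableEq K]
    (blk : Fin d → K) (C : ℕ) (cl : K → Fin (C + 1))
    (f : EuclideanSpace ℝ (Fin d) → ℝ) (L : ℝ) (hL : 0 < L)
    (hdiff : Differentiable ℝ f)
    (hsmooth : ∀ x y : EuclideanSpace ℝ (Fin d),
      ‖gradient f x - gradient f y‖ ≤ L * ‖x - y‖)
    (S Q : ℕ) (hS : 1 ≤ S) (hQ : 1 ≤ Q)
    (η : ℝ) (hη : 0 < η) (hηub : η ≤ 1 / ((L + 1) * S * Q))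
    (θ : EuclideanSpace ℝ (Fin d))
    (kc : Fin (C + 1) → ℕ → K) (hkc : ∀ c, ∀ s < S, cl (kc c s) = c)
    (v : Fin (C + 1) → ℕ → ℕ → EuclideanSpace ℝ (Fin d))
    (hinit : ∀ c, v c 0 0 = θ)
    (hrecq : ∀ c, ∀ s < S, ∀ q < Q,
      v c s (q + 1) = v c s q - η • maskedGrad blk f (v c s q) (kc c s))
    (hrecs : ∀ c, ∀ s < S, v c (s + 1) 0 = v c s Q)
    (θplus : EuclideanSpace ℝ (Fin d))
    (hθplus : ∀ i : Fin d, θplus i = v (cl (blk i)) S 0 i)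
    (C₁ : ℝ) (hC₁ : C₁ = η * Real.exp 1 * L * S * Q) :
    f θplus - f θ
      ≤ η * S * Q * C₁ * (1 + η * (L + 1) * S * Q * C₁) * ‖gradient f θ‖ ^ 2
        + η * (η * (L + 1) * S * Q - 1) *
            ∑ c : Fin (C + 1), ∑ s ∈ Finset.range S, ∑ q ∈ Finset.range Q,
              ‖maskedGrad blk f θ (kc c s)‖ ^ 2 := by
  classical
  have hQ0 : 0 < Q := hQ
  set N := S * Q with hN
  have hN0 : 0 < N := Nat.mul_pos hS hQ
  set u : Fin (C + 1) → ℕ → EuclideanSpace ℝ (Fin d) :=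
    fun c => mtcdTraj blk f η Q (kc c) θ with hu
  have hu0 : ∀ c, u c 0 = θ := fun c => rfl
  have hustep : ∀ c t, u c (t + 1) = u c t - η • maskedGrad blk f (u c t) (kc c (t / Q)) :=
    fun c t => rfl
  have hdivS : ∀ t, t < N → t / Q < S := by
    intro t ht
    exact (Nat.div_lt_iff_lt_mul hQ0).mpr (by omega)
  -- correspondence between v and u
  have huv : ∀ c, ∀ t, t ≤ N → v c (t / Q) (t % Q) = u c t := by
    intro c t
    induction t with
    | zero => intro _; simpa [hu0] using hinit c
    | succ t ih =>
      intro ht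
      have htN : t < N := by omega
      have hs : t / Q < S := hdivS t htN
      have hq : t % Q < Q := Nat.mod_lt _ hQ0
      have hteq : Q * (t / Q) + t % Q = t := Nat.div_add_mod t Q
      have hstep := hrecq c (t / Q) hs (t % Q) hq
      rw [ih (le_of_lt htN)] at hstep
      by_cases hqQ : t % Q + 1 < Q
      · have e1 : t + 1 = Q * (t / Q) + (t % Q + 1) := by omega
        have e2 : (t + 1) / Q = t / Q := by
          rw [e1, Nat.mul_add_div hQ0, Nat.div_eq_of_lt hqQ, Nat.add_zero]
        have e3 : (t + 1) % Q = t % Q + 1 := by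
          rw [e1, Nat.mul_add_mod, Nat.mod_eq_of_lt hqQ]
        rw [e2, e3, hstep, hustep]
      · have hqQ' : t % Q + 1 = Q := by omega
        have e1 : t + 1 = Q * (t / Q + 1) := by rw [Nat.mul_add, Nat.mul_one]; omega
        have e2 : (t + 1) / Q = t / Q + 1 := by
          rw [e1, Nat.mul_div_cancel_left _ hQ0]
        have e3 : (t + 1) % Q = 0 := by
          rw [e1, Nat.mul_mod_right]
        rw [hqQ'] at hstep
        rw [e2, e3, hrecs c (t / Q) hs, hstep, hustep]
  -- support: each trajectory only changes coordinates of its own cluster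
  have hmask0 : ∀ (x : EuclideanSpace ℝ (Fin d)) (k : K) (i : Fin d),
      blk i ≠ k → maskedGrad blk f x k i = 0 := by
    intro x k i h
    simp [maskedGrad, h]
  have hsupp : ∀ (c : Fin (C + 1)) (t : ℕ), t ≤ N → ∀ i, cl (blk i) ≠ c → u c t i = θ i := by
    intro c t
    induction t with
    | zero => intro _ i _; rfl
    | succ t ih =>
      intro ht i hi
      have htN : t < N := by omega
      have hblk : blk i ≠ kc c (t / Q) := by
        intro h
        exact hi (h ▸ hkc c (t / Q) (hdivS t htN))
      rw [hustep, PiLp.sub_apply, PiLp.smul_apply, hmask0 _ _ _ hblk, smul_zero, sub_zero,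
        ih (le_of_lt htN) i hi]
  -- θ⁺ in terms of the trajectories
  have hNdiv : N / Q = S := by rw [hN, Nat.mul_div_cancel _ hQ0]
  have hNmod : N % Q = 0 := by rw [hN, Nat.mul_mod_left]
  have huvN : ∀ c, v c S 0 = u c N := by
    intro c
    have := huv c N (le_refl N)
    rwa [hNdiv, hNmod] at this
  have hθp : θplus = θ + ∑ c : Fin (C + 1), (u c N - θ) := by
    apply PiLp.ext
    intro i
    rw [hθplus i, huvN, PiLp.add_apply, euclid_sum_apply]
    rw [Finset.sum_eq_single (cl (blk i))]
    · rw [PiLp.sub_apply]; ring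
    · intro c _ hc
      rw [PiLp.sub_apply, hsupp c N (le_refl N) i hc.symm, sub_self]
    · intro h; exact absurd (Finset.mem_univ _) h
  -- notation
  set Gn : ℝ := ‖gradient f θ‖ with hGn
  set g : Fin (C + 1) → ℕ → EuclideanSpace ℝ (Fin d) :=
    fun c t => maskedGrad blk f (u c t) (kc c (t / Q)) with hg
  set Gg : Fin (C + 1) → ℕ → EuclideanSpace ℝ (Fin d) :=
    fun c t => maskedGrad blk f θ (kc c (t / Q)) with hGg
  set D : ℕ → EuclideanSpace ℝ (Fin d) :=
    fun t => ∑ c : Fin (C + 1), (u c t - θ) with hD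
  have hblkne : ∀ t, t < N → ∀ (c : Fin (C + 1)) (i : Fin d),
      cl (blk i) ≠ c → blk i ≠ kc c (t / Q) := by
    intro t ht c i hi h
    exact hi (h ▸ hkc c (t / Q) (hdivS t ht))
  have hDnormsq : ∀ t, t ≤ N → ‖D t‖ ^ 2 = ∑ c : Fin (C + 1), ‖u c t - θ‖ ^ 2 := by
    intro t ht
    apply norm_sq_sum_of_disjoint_support _ (fun i => cl (blk i))
    intro c i hi
    rw [PiLp.sub_apply, hsupp c t ht i hi, sub_self]
  have hPle : ∀ t, t < N → ‖∑ c : Fin (C + 1), Gg c t‖ ≤ Gn := by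
    intro t ht
    apply euclid_norm_le_of_abs_le
    intro i
    rw [euclid_sum_apply, Finset.sum_eq_single (cl (blk i))]
    · simp only [hGg, maskedGrad]
      split_ifs
      · exact le_refl _
      · simp
    · intro c _ hc
      exact hmask0 _ _ _ (hblkne t ht c i hc.symm)
    · intro h; exact absurd (Finset.mem_univ _) h
  have hgG : ∀ t (c : Fin (C + 1)), ‖g c t - Gg c t‖ ≤ L * ‖u c t - θ‖ := by
    intro t c
    exact (maskedGrad_sub_norm_le blk f (u c t) θ (kc c (t / Q))).trans (hsmooth _ _)
  have hEle : ∀ t, t < N → ‖∑ c : Fin (C + 1), (g c t - Gg c t)‖ ≤ L * ‖D t‖ := by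
    intro t ht
    have hsq : ‖∑ c : Fin (C + 1), (g c t - Gg c t)‖ ^ 2 ≤ (L * ‖D t‖) ^ 2 := by
      rw [norm_sq_sum_of_disjoint_support _ (fun i => cl (blk i))]
      · calc ∑ c : Fin (C + 1), ‖g c t - Gg c t‖ ^ 2
            ≤ ∑ c : Fin (C + 1), (L * ‖u c t - θ‖) ^ 2 := by
              apply Finset.sum_le_sum
              intro c _
              exact pow_le_pow_left₀ (norm_nonneg _) (hgG t c) 2
          _ = (L * ‖D t‖) ^ 2 := by
              simp only [mul_pow]
              rw [hDnormsq t (le_of_lt ht), Finset.mul_sum]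
      · intro c i hi
        rw [PiLp.sub_apply]
        simp only [hg, hGg]
        rw [hmask0 _ _ _ (hblkne t ht c i hi),
          hmask0 _ _ _ (hblkne t ht c i hi), sub_self]
    exact (pow_le_pow_iff_left₀ (norm_nonneg _)
      (mul_nonneg hL.le (norm_nonneg _)) two_ne_zero).mp hsq
  have hsplit : ∀ t, (∑ c : Fin (C + 1), g c t)
      = (∑ c : Fin (C + 1), Gg c t) + ∑ c : Fin (C + 1), (g c t - Gg c t) := by
    intro t
    rw [← Finset.sum_add_distrib]
    apply Finset.sum_congr rfl
    intro c _
    abel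
  have hDstep : ∀ t, D (t + 1) = D t - η • ∑ c : Fin (C + 1), g c t := by
    intro t
    have h1 : ∀ c : Fin (C + 1), u c (t + 1) - θ = (u c t - θ) - η • g c t := by
      intro c
      rw [hustep]
      abel
    calc D (t + 1) = ∑ c : Fin (C + 1), ((u c t - θ) - η • g c t) := by
          apply Finset.sum_congr rfl; intro c _; exact h1 c
      _ = D t - η • ∑ c : Fin (C + 1), g c t := by
          rw [Finset.sum_sub_distrib, Finset.smul_sum]
  have hDrec : ∀ t, t < N → ‖D (t + 1)‖ ≤ (1 + η * L) * ‖D t‖ + η * Gn := by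
    intro t ht
    rw [hDstep t, hsplit t]
    calc ‖D t - η • ((∑ c : Fin (C + 1), Gg c t) + ∑ c : Fin (C + 1), (g c t - Gg c t))‖
        ≤ ‖D t‖ + ‖η • ((∑ c : Fin (C + 1), Gg c t) + ∑ c : Fin (C + 1), (g c t - Gg c t))‖ :=
          norm_sub_le _ _
      _ = ‖D t‖ + η * ‖(∑ c : Fin (C + 1), Gg c t) + ∑ c : Fin (C + 1), (g c t - Gg c t)‖ := by
          rw [norm_smul, Real.norm_eq_abs, abs_of_pos hη]
      _ ≤ ‖D t‖ + η * (‖∑ c : Fin (C + 1), Gg c t‖ + ‖∑ c : Fin (C + 1), (g c t - Gg c t)‖) := by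
          have := norm_add_le (∑ c : Fin (C + 1), Gg c t) (∑ c : Fin (C + 1), (g c t - Gg c t))
          nlinarith
      _ ≤ ‖D t‖ + η * (Gn + L * ‖D t‖) := by
          have h1 := hPle t ht
          have h2 := hEle t ht
          nlinarith
      _ = (1 + η * L) * ‖D t‖ + η * Gn := by ring
  have hηN : η * (L + 1) * N ≤ 1 := by
    have hpos : (0 : ℝ) < (L + 1) * S * Q := by
      have : (0:ℝ) < (S:ℝ) := by exact_mod_cast hS
      have : (0:ℝ) < (Q:ℝ) := by exact_mod_cast hQ
      positivity
    rw [le_div_iff₀ hpos] at hηub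
    have hcast : ((N : ℕ) : ℝ) = (S : ℝ) * (Q : ℝ) := by rw [hN]; push_cast; ring
    rw [hcast]
    linarith
  have hGn0 : 0 ≤ Gn := norm_nonneg _
  have hD0 : D 0 = 0 := by
    rw [hD]
    apply Finset.sum_eq_zero
    intro c _
    rw [hu0, sub_self]
  -- the deviation bound
  have hDle : ∀ t, t ≤ N → ‖D t‖ ≤ η * N * Real.exp 1 * Gn := by
    have hx0 : ‖D (min 0 N)‖ = 0 := by
      rw [min_eq_left (Nat.zero_le N), hD0, norm_zero]
    have hxrec : ∀ t, ‖D (min (t + 1) N)‖ ≤ (1 + η * L) * ‖D (min t N)‖ + η * Gn := by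
      intro t
      by_cases ht : t < N
      · rw [min_eq_left (by omega : t + 1 ≤ N), min_eq_left (le_of_lt ht)]
        exact hDrec t ht
      · rw [min_eq_right (by omega : N ≤ t + 1), min_eq_right (by omega : N ≤ t)]
        nlinarith [norm_nonneg (D N), mul_nonneg hη.le hL.le, mul_nonneg hη.le hGn0]
    have hgeo := geom_bound (a := η * L) (b := η * Gn)
      (mul_nonneg hη.le hL.le) (mul_nonneg hη.le hGn0)
      (fun t => ‖D (min t N)‖) hx0 hxrec (fun t => norm_nonneg _)
    intro t ht
    have h1 : ‖D (min t N)‖ ≤ η * Gn * t * (1 + η * L) ^ t := hgeo t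
    rw [min_eq_left ht] at h1
    have hηL0 : (0:ℝ) ≤ η * L := mul_nonneg hη.le hL.le
    have htN : (t : ℝ) ≤ (N : ℝ) := by exact_mod_cast ht
    have hN0' : (0:ℝ) ≤ (N : ℝ) := Nat.cast_nonneg N
    have ht0 : (0:ℝ) ≤ (t : ℝ) := Nat.cast_nonneg t
    have hηLN : η * L * (N : ℝ) ≤ 1 := by
      have hηN0 : (0:ℝ) ≤ η * (N : ℝ) := mul_nonneg hη.le hN0'
      nlinarith
    have hpow : (1 + η * L) ^ t ≤ Real.exp 1 := by
      calc (1 + η * L) ^ t ≤ Real.exp (η * L) ^ t := by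
            apply pow_le_pow_left₀ (by linarith) _ t
            have := Real.add_one_le_exp (η * L)
            linarith
        _ = Real.exp ((t : ℝ) * (η * L)) := by rw [← Real.exp_nat_mul]
        _ ≤ Real.exp 1 := by
            apply Real.exp_le_exp.mpr
            have := mul_le_mul_of_nonneg_right htN hηL0
            linarith
    have hpow0 : (0:ℝ) ≤ (1 + η * L) ^ t := by positivity
    have hb0 : (0:ℝ) ≤ η * Gn := mul_nonneg hη.le hGn0
    calc ‖D t‖ ≤ η * Gn * t * (1 + η * L) ^ t := h1
      _ ≤ η * Gn * N * (1 + η * L) ^ t := by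
          apply mul_le_mul_of_nonneg_right _ hpow0
          exact mul_le_mul_of_nonneg_left htN hb0
      _ ≤ η * Gn * N * Real.exp 1 := by
          apply mul_le_mul_of_nonneg_left hpow
          exact mul_nonneg hb0 hN0'
      _ = η * N * Real.exp 1 * Gn := by ring
  -- D N as a sum of gradients
  have hDsum : ∀ t, D t = (-η) • ∑ j ∈ Finset.range t, ∑ c : Fin (C + 1), g c j := by
    intro t
    induction t with
    | zero => simp [hD0]
    | succ t ih =>
      rw [hDstep t, ih, Finset.sum_range_succ]
      module
  have hθD : θplus - θ = D N := by
    rw [hθp]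
    exact add_sub_cancel_left θ (D N)
  set SS2 : ℝ := ∑ t ∈ Finset.range N, ∑ c : Fin (C + 1), ‖Gg c t‖ ^ 2 with hSS2
  have hSS20 : 0 ≤ SS2 := by
    apply Finset.sum_nonneg
    intro t _
    apply Finset.sum_nonneg
    intro c _
    positivity
  have hC₁N : C₁ = η * Real.exp 1 * L * (N : ℝ) := by
    rw [hC₁, hN]; push_cast; ring
  have hC₁0 : 0 ≤ C₁ := by
    rw [hC₁N]; positivity
  have hinnerGg : ∀ t, ⟪gradient f θ, ∑ c : Fin (C + 1), Gg c t⟫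
      = ∑ c : Fin (C + 1), ‖Gg c t‖ ^ 2 := by
    intro t
    rw [inner_sum]
    exact Finset.sum_congr rfl fun c _ => maskedGrad_inner blk f θ (kc c (t / Q))
  have hIt : ∀ t ∈ Finset.range N,
      (∑ c : Fin (C + 1), ‖Gg c t‖ ^ 2) - C₁ * Gn ^ 2
        ≤ ⟪gradient f θ, ∑ c : Fin (C + 1), g c t⟫ := by
    intro t htm
    have ht : t < N := Finset.mem_range.mp htm
    rw [hsplit t, inner_add_right, hinnerGg t]
    have h2 : |⟪gradient f θ, ∑ c : Fin (C + 1), (g c t - Gg c t)⟫| ≤ Gn * (L * ‖D t‖) := by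
      calc |⟪gradient f θ, ∑ c : Fin (C + 1), (g c t - Gg c t)⟫|
          ≤ ‖gradient f θ‖ * ‖∑ c : Fin (C + 1), (g c t - Gg c t)‖ :=
            abs_real_inner_le_norm _ _
        _ ≤ Gn * (L * ‖D t‖) := mul_le_mul_of_nonneg_left (hEle t ht) hGn0
    have h3 := hDle t (le_of_lt ht)
    have h4 : Gn * (L * ‖D t‖) ≤ C₁ * Gn ^ 2 := by
      rw [hC₁N]
      nlinarith [mul_nonneg hGn0 hL.le, Nat.cast_nonneg (α := ℝ) N, Real.exp_pos 1]
    have habs := abs_le.mp h2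
    linarith [habs.1]
  have hT1 : ⟪gradient f θ, D N⟫ ≤ η * ((N : ℝ) * (C₁ * Gn ^ 2)) - η * SS2 := by
    rw [hDsum N, real_inner_smul_right, inner_sum]
    have hI : SS2 - (N : ℝ) * (C₁ * Gn ^ 2)
        ≤ ∑ t ∈ Finset.range N, ⟪gradient f θ, ∑ c : Fin (C + 1), g c t⟫ := by
      have h5 := Finset.sum_le_sum hIt
      rw [Finset.sum_sub_distrib, Finset.sum_const, Finset.card_range, nsmul_eq_mul] at h5
      exact h5
    have h6 := mul_le_mul_of_nonneg_left hI hη.le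
    linarith
  -- second order term
  have hXsplit : (∑ t ∈ Finset.range N, ∑ c : Fin (C + 1), g c t)
      = (∑ t ∈ Finset.range N, ∑ c : Fin (C + 1), Gg c t)
        + ∑ t ∈ Finset.range N, ∑ c : Fin (C + 1), (g c t - Gg c t) := by
    rw [← Finset.sum_add_distrib]
    exact Finset.sum_congr rfl fun t _ => hsplit t
  have ha2 : ‖∑ t ∈ Finset.range N, ∑ c : Fin (C + 1), Gg c t‖ ^ 2 ≤ (N : ℝ) * SS2 := by
    calc ‖∑ t ∈ Finset.range N, ∑ c : Fin (C + 1), Gg c t‖ ^ 2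
        ≤ (∑ t ∈ Finset.range N, ‖∑ c : Fin (C + 1), Gg c t‖) ^ 2 :=
          pow_le_pow_left₀ (norm_nonneg _) (norm_sum_le _ _) 2
      _ ≤ (N : ℝ) * ∑ t ∈ Finset.range N, ‖∑ c : Fin (C + 1), Gg c t‖ ^ 2 := by
          have := sq_sum_le_card_mul_sum_sq (s := Finset.range N)
            (f := fun t => ‖∑ c : Fin (C + 1), Gg c t‖)
          simpa [Finset.card_range] using this
      _ = (N : ℝ) * SS2 := by
          congr 1
          apply Finset.sum_congr rfl
          intro t htm
          have ht : t < N := Finset.mem_range.mp htm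
          apply norm_sq_sum_of_disjoint_support _ (fun i => cl (blk i))
          intro c i hi
          simp only [hGg]
          exact hmask0 _ _ _ (hblkne t ht c i hi)
  have hb : ‖∑ t ∈ Finset.range N, ∑ c : Fin (C + 1), (g c t - Gg c t)‖
      ≤ (N : ℝ) * (C₁ * Gn) := by
    calc ‖∑ t ∈ Finset.range N, ∑ c : Fin (C + 1), (g c t - Gg c t)‖
        ≤ ∑ t ∈ Finset.range N, ‖∑ c : Fin (C + 1), (g c t - Gg c t)‖ := norm_sum_le _ _
      _ ≤ ∑ t ∈ Finset.range N, (C₁ * Gn) := by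
          apply Finset.sum_le_sum
          intro t htm
          have ht : t < N := Finset.mem_range.mp htm
          calc ‖∑ c : Fin (C + 1), (g c t - Gg c t)‖ ≤ L * ‖D t‖ := hEle t ht
            _ ≤ L * (η * N * Real.exp 1 * Gn) :=
                mul_le_mul_of_nonneg_left (hDle t (le_of_lt ht)) hL.le
            _ = C₁ * Gn := by rw [hC₁N]; ring
      _ = (N : ℝ) * (C₁ * Gn) := by
          rw [Finset.sum_const, Finset.card_range, nsmul_eq_mul]
  have hDN2 : ‖D N‖ ^ 2 ≤ 2 * η ^ 2 * ((N : ℝ) * SS2)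
      + 2 * η ^ 2 * ((N : ℝ) * (C₁ * Gn)) ^ 2 := by
    have h0 : ‖D N‖ = η * ‖∑ t ∈ Finset.range N, ∑ c : Fin (C + 1), g c t‖ := by
      rw [hDsum N, norm_smul, Real.norm_eq_abs, abs_neg, abs_of_pos hη]
    have h7 : ‖∑ t ∈ Finset.range N, ∑ c : Fin (C + 1), g c t‖
        ≤ ‖∑ t ∈ Finset.range N, ∑ c : Fin (C + 1), Gg c t‖
          + ‖∑ t ∈ Finset.range N, ∑ c : Fin (C + 1), (g c t - Gg c t)‖ := by
      rw [hXsplit]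
      exact norm_add_le _ _
    have h9 : ‖∑ t ∈ Finset.range N, ∑ c : Fin (C + 1), g c t‖ ^ 2
        ≤ 2 * ((N : ℝ) * SS2) + 2 * ((N : ℝ) * (C₁ * Gn)) ^ 2 := by
      have ha := norm_nonneg (∑ t ∈ Finset.range N, ∑ c : Fin (C + 1), Gg c t)
      have hbn := norm_nonneg (∑ t ∈ Finset.range N, ∑ c : Fin (C + 1), (g c t - Gg c t))
      have hXn := norm_nonneg (∑ t ∈ Finset.range N, ∑ c : Fin (C + 1), g c t)
      nlinarith [ha2, mul_self_le_mul_self hXn h7, mul_self_le_mul_self hbn hb,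
        sq_nonneg (‖∑ t ∈ Finset.range N, ∑ c : Fin (C + 1), Gg c t‖
          - ‖∑ t ∈ Finset.range N, ∑ c : Fin (C + 1), (g c t - Gg c t)‖)]
    rw [h0]
    calc (η * ‖∑ t ∈ Finset.range N, ∑ c : Fin (C + 1), g c t‖) ^ 2
        = η ^ 2 * ‖∑ t ∈ Finset.range N, ∑ c : Fin (C + 1), g c t‖ ^ 2 := by ring
      _ ≤ η ^ 2 * (2 * ((N : ℝ) * SS2) + 2 * ((N : ℝ) * (C₁ * Gn)) ^ 2) :=
          mul_le_mul_of_nonneg_left h9 (sq_nonneg η)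
      _ = 2 * η ^ 2 * ((N : ℝ) * SS2) + 2 * η ^ 2 * ((N : ℝ) * (C₁ * Gn)) ^ 2 := by ring
  -- identify the target sum
  have hsum_eq : (∑ c : Fin (C + 1), ∑ s ∈ Finset.range S, ∑ q ∈ Finset.range Q,
      ‖maskedGrad blk f θ (kc c s)‖ ^ 2) = SS2 := by
    rw [hSS2]
    have hper : ∀ c : Fin (C + 1),
        (∑ s ∈ Finset.range S, ∑ q ∈ Finset.range Q, ‖maskedGrad blk f θ (kc c s)‖ ^ 2)
          = ∑ t ∈ Finset.range N, ‖Gg c t‖ ^ 2 := by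
      intro c
      rw [← sum_div_blocks hQ (fun s => ‖maskedGrad blk f θ (kc c s)‖ ^ 2)]
    rw [Finset.sum_congr rfl (fun c _ => hper c)]
    exact Finset.sum_comm
  have hSQN : ((N : ℕ) : ℝ) = (S : ℝ) * (Q : ℝ) := by rw [hN]; push_cast; ring
  rw [hsum_eq]
  have hdesc : f θplus ≤ f θ + ⟪gradient f θ, D N⟫ + L / 2 * ‖D N‖ ^ 2 := by
    have h8 := descent_lemma hL hdiff hsmooth θ θplus
    rwa [hθD] at h8
  have hfin : f θplus - f θ ≤ η * (N : ℝ) * C₁ * (1 + η * (L + 1) * (N : ℝ) * C₁) * Gn ^ 2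
      + η * (η * (L + 1) * (N : ℝ) - 1) * SS2 := by
    have h1 : 0 ≤ η ^ 2 * (N : ℝ) * SS2 := by
      apply mul_nonneg _ hSS20
      positivity
    have h2 : 0 ≤ η ^ 2 * (N : ℝ) ^ 2 * C₁ ^ 2 * Gn ^ 2 := by positivity
    nlinarith [hdesc, hT1, hDN2, hL.le, mul_le_mul_of_nonneg_left hDN2 hL.le]
  calc f θplus - f θ
      ≤ η * (N : ℝ) * C₁ * (1 + η * (L + 1) * (N : ℝ) * C₁) * Gn ^ 2
        + η * (η * (L + 1) * (N : ℝ) - 1) * SS2 := hfin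
    _ = η * S * Q * C₁ * (1 + η * (L + 1) * S * Q * C₁) * Gn ^ 2
        + η * (η * (L + 1) * S * Q - 1) * SS2 := by
          rw [hSQN]
          ring
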